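/- Fix n ≥ 1. Then Q_m(V_n) ⊆ V_n for every m ∈ ℕ, and for every m with 1 ≤ m ≤ n, every x ∈ V_n with Q_m(x) = 0 equals Q_m(y) for some y ∈ V_n; that is, the Margolis homology of V_n with respect to Q_m vanishes for all 1 ≤ m ≤ n. In particular the case m = n gives H(z(n)/v_n; Q_n) ≅ 0, one chromatic height higher than for z(n). (Corollary 2.21 of the paper, acyclicity cases: H(z(n)/v_n; Q_m) ≅ 0 for 1 ≤ m ≤ n.) -/
import Mathlib


/-!
Let `F₂ := ZMod 2` and `A := MvPolynomial {i : ℕ // 1 ≤ i} F₂`, modeling the mod 2 dual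
Steenrod algebra, with Milnor primitives `Q m` as below.  For `n ≥ 1` let `Sn n ⊆ A` be the
`F₂`-subalgebra generated by `ξ₁², ξ₂, …, ξ_n`, and let `Vn n := S_n + S_n·ξ_{n+1}` be the set
of all elements `s + s' * ξ_{n+1}` with `s, s' ∈ S_n`; `Vn n` models `H_*(z(n)/v_n; F₂)`.

STATEMENT (Corollary 2.21, acyclicity cases): `Q_m (V_n) ⊆ V_n` for every `m`, and for every
`1 ≤ m ≤ n`, every `x ∈ V_n` with `Q_m x = 0` equals `Q_m y` for some `y ∈ V_n`; that is,
`H(z(n)/v_n; Q_m) ≅ 0` for `1 ≤ m ≤ n`.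
-/

open MvPolynomial

abbrev F₂ : Type := ZMod 2

/-- The mod 2 dual Steenrod algebra, modeled as a polynomial algebra on `ξ_i`, `i ≥ 1`. -/
abbrev A : Type := MvPolynomial {i : ℕ // 1 ≤ i} F₂

/-- The generators `ξ_k`, with the convention `ξ_0 = 1`. -/
noncomputable def ξ (k : ℕ) : A :=
  if h : 1 ≤ k then X (⟨k, h⟩ : {i : ℕ // 1 ≤ i}) else 1

/-- The Milnor primitive `Q_m`, as the unique `F₂`-derivation of `A` with
`Q_m (ξ_k) = ξ_{k-m-1} ^ (2 ^ (m+1))` for `k ≥ m + 1` and `Q_m (ξ_k) = 0` for `1 ≤ k ≤ m`. -/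
noncomputable def Q (m : ℕ) : Derivation F₂ A A :=
  MvPolynomial.mkDerivation F₂ fun i : {i : ℕ // 1 ≤ i} =>
    if m + 1 ≤ i.1 then ξ (i.1 - (m + 1)) ^ 2 ^ (m + 1) else 0

/-- The subalgebra `S_n = F₂[ξ₁², ξ₂, …, ξ_n] ⊆ A`, modeling `H_*(z(n); F₂)`. -/
noncomputable def Sn (n : ℕ) : Subalgebra F₂ A :=
  Algebra.adjoin F₂ ({ξ 1 ^ 2} ∪ {y : A | ∃ k : ℕ, 2 ≤ k ∧ k ≤ n ∧ y = ξ k})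

/-- `V_n = S_n + S_n · ξ_{n+1}` — all elements `s + s' * ξ_{n+1}` with `s, s' ∈ S_n` —
modeling `H_*(z(n)/v_n; F₂) ≅ F₂[ξ̄₁², ξ̄₂, …, ξ̄_n] ⊗ E(ξ̄_{n+1})`. -/
noncomputable def Vn (n : ℕ) : Set A :=
  {x : A | ∃ s ∈ Sn n, ∃ s' ∈ Sn n, x = s + s' * ξ (n + 1)}


lemma xi_zero : ξ 0 = 1 := dif_neg (by omega)

lemma Q_xi (m k : ℕ) (hk : 1 ≤ k) :
    Q m (ξ k) = if m + 1 ≤ k then ξ (k - (m + 1)) ^ 2 ^ (m + 1) else 0 := by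
  rw [ξ, dif_pos hk, Q, mkDerivation_X]

lemma Q_xi_self_succ (m : ℕ) : Q m (ξ (m + 1)) = 1 := by
  rw [Q_xi m (m + 1) (by omega), if_pos le_rfl, Nat.sub_self, xi_zero, one_pow]

lemma xi_sq_mem (n j : ℕ) (h : j ≤ n) : ξ j ^ 2 ∈ Sn n := by
  match j with
  | 0 => rw [xi_zero, one_pow]; exact one_mem _
  | 1 => exact Algebra.subset_adjoin (Or.inl rfl)
  | (j + 2) =>
    exact pow_mem (show ξ (j + 2) ∈ Sn n from
      Algebra.subset_adjoin (Or.inr ⟨j + 2, by omega, h, rfl⟩)) 2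

lemma Q_xi_mem (n m k : ℕ) (h1 : 1 ≤ k) (h2 : k ≤ n + 1) : Q m (ξ k) ∈ Sn n := by
  rw [Q_xi m k h1]
  split
  · rw [show 2 ^ (m + 1) = 2 * 2 ^ m by rw [pow_succ]; ring, pow_mul]
    exact pow_mem (xi_sq_mem n _ (by omega)) _
  · exact zero_mem _

lemma Q_xi_one_sq (m : ℕ) : Q m (ξ 1 ^ 2) = 0 := by
  rw [pow_two, Derivation.leibniz, smul_eq_mul]
  exact CharTwo.add_self_eq_zero _

lemma Q_mem_Sn (n m : ℕ) (x : A) (hx : x ∈ Sn n) : Q m x ∈ Sn n := by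
  induction hx using Algebra.adjoin_induction with
  | mem g hg =>
    rcases hg with hg | ⟨k, hk2, hkn, rfl⟩
    · rw [Set.mem_singleton_iff] at hg; rw [hg, Q_xi_one_sq]; exact zero_mem _
    · exact Q_xi_mem n m k (by omega) (by omega)
  | algebraMap r => rw [Derivation.map_algebraMap]; exact zero_mem _
  | add x y hx hy ihx ihy => rw [map_add]; exact add_mem ihx ihy
  | mul x y hx hy ihx ihy =>
    rw [Derivation.leibniz, smul_eq_mul]
    exact add_mem (mul_mem hx ihy) (mul_mem hy ihx)

lemma Qn_zero_on_Sn (n : ℕ) (s : A) (hs : s ∈ Sn n) : Q n s = 0 := by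
  induction hs using Algebra.adjoin_induction with
  | mem g hg =>
    rcases hg with hg | ⟨k, hk2, hkn, rfl⟩
    · rw [Set.mem_singleton_iff] at hg; rw [hg, Q_xi_one_sq]
    · rw [Q_xi n k (by omega), if_neg (by omega)]
  | algebraMap r => rw [Derivation.map_algebraMap]
  | add x y hx hy ihx ihy => rw [map_add, ihx, ihy, add_zero]
  | mul x y hx hy ihx ihy => rw [Derivation.leibniz, ihx, ihy, smul_zero, smul_zero, add_zero]

/-- Corollary 2.21 (acyclicity cases): `H(z(n)/v_n; Q_m) ≅ 0` for `1 ≤ m ≤ n`. -/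
theorem margolisHomology_zn_mod_vn_acyclic (n : ℕ) (hn : 1 ≤ n) :
    (∀ m : ℕ, ∀ x ∈ Vn n, Q m x ∈ Vn n) ∧
    (∀ m : ℕ, 1 ≤ m → m ≤ n → ∀ x ∈ Vn n, Q m x = 0 → ∃ y ∈ Vn n, x = Q m y) := by
  constructor
  · rintro m x ⟨s, hs, s', hs', rfl⟩
    refine ⟨Q m s + s' * Q m (ξ (n + 1)), ?_, Q m s', Q_mem_Sn n m s' hs', ?_⟩
    · exact add_mem (Q_mem_Sn n m s hs)
        (mul_mem hs' (Q_xi_mem n m (n + 1) (by omega) le_rfl))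
    · rw [map_add, Derivation.leibniz]; simp only [smul_eq_mul]; ring
  · rintro m hm1 hmn x hx hQx
    rcases lt_or_eq_of_le hmn with hlt | rfl
    · obtain ⟨s, hs, s', hs', rfl⟩ := hx
      have hu : ξ (m + 1) ∈ Sn n :=
        Algebra.subset_adjoin (Or.inr ⟨m + 1, by omega, by omega, rfl⟩)
      refine ⟨ξ (m + 1) * (s + s' * ξ (n + 1)),
        ⟨ξ (m + 1) * s, mul_mem hu hs, ξ (m + 1) * s', mul_mem hu hs', by ring⟩, ?_⟩
      rw [Derivation.leibniz, hQx, Q_xi_self_succ, smul_zero, smul_eq_mul, mul_one, zero_add]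
    · obtain ⟨s, hs, s', hs', rfl⟩ := hx
      have h1 : Q m (s + s' * ξ (m + 1)) = s' := by
        rw [map_add, Qn_zero_on_Sn m s hs, Derivation.leibniz, Qn_zero_on_Sn m s' hs',
          Q_xi_self_succ, smul_zero, smul_eq_mul, mul_one, zero_add, add_zero]
      have hs'0 : s' = 0 := by rw [← h1, hQx]
      refine ⟨s * ξ (m + 1), ⟨0, zero_mem _, s, hs, by ring⟩, ?_⟩
      rw [Derivation.leibniz, Qn_zero_on_Sn m s hs, Q_xi_self_succ, smul_zero, smul_eq_mul,
        mul_one, add_zero, hs'0, zero_mul, add_zero]
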